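/- Let F(x) ∈ F[x₁,…,x_n]^{r×r} be such that for every partition of the variables x = y ⊔ z there exist G ∈ F[y]^{r×r} and H ∈ F[z]^{r×r} with F = G·H (F is computed by a width-r commutative ROABP). Suppose that for every subset y of at most ⌊log₂ r²⌋ + 1 variables, the restriction map achieves support-⌊log₂ r²⌋ rank concentration at a generic shift g. Then F itself is support-⌊log₂ r²⌋ rank concentrated at g: every derivative ∂_{x^a}(F)(g) with |a|₀ > ⌊log₂ r²⌋ lies in the span of derivatives ∂_{x^{a'}}(F)(g) with |a'|₀ < |a|₀, and hence by induction in the span of derivatives of support ≤ ⌊log₂ r²⌋. -/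

import Mathlib

/-- The Hasse derivative `∂_{x^a}(f)` evaluated at `α`: the coefficient of
`x^a` in the shifted polynomial `f(x + α)`. -/
noncomputable def hasseAt {σ : Type*} {F : Type*} [CommSemiring F]
    (f : MvPolynomial σ F) (a : σ →₀ ℕ) (α : σ → F) : F :=
  MvPolynomial.coeff a
    (MvPolynomial.bind₁ (fun i => MvPolynomial.X i + MvPolynomial.C (α i)) f)

open MvPolynomial in
lemma hasseAt_sum {σ F ι : Type*} [CommSemiring F] (s : Finset ι)
    (f : ι → MvPolynomial σ F) (a : σ →₀ ℕ) (α : σ → F) :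
    hasseAt (∑ i ∈ s, f i) a α = ∑ i ∈ s, hasseAt (f i) a α := by
  simp [hasseAt, map_sum, MvPolynomial.coeff_sum]

open MvPolynomial in
lemma hasseAt_mul {σ F : Type*} [DecidableEq σ] [CommSemiring F] (f h : MvPolynomial σ F)
    (a : σ →₀ ℕ) (α : σ → F) :
    hasseAt (f * h) a α
      = ∑ p ∈ Finset.HasAntidiagonal.antidiagonal a, hasseAt f p.1 α * hasseAt h p.2 α := by
  simp [hasseAt, map_mul, MvPolynomial.coeff_mul]

open MvPolynomial in
lemma hasseAt_eq_zero_of_vars {σ F : Type*} [CommSemiring F] [Nontrivial F] {S : Finset σ}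
    {f : MvPolynomial σ F} (hf : f.vars ⊆ S) {a : σ →₀ ℕ}
    (ha : ¬ a.support ⊆ S) (α : σ → F) : hasseAt f a α = 0 := by
  classical
  by_contra h
  apply ha
  have hmem : a ∈ (MvPolynomial.bind₁
      (fun i => MvPolynomial.X i + MvPolynomial.C (α i)) f).support :=
    MvPolynomial.mem_support_iff.2 h
  intro i hi
  have h1 : i ∈ (MvPolynomial.bind₁
      (fun i => MvPolynomial.X i + MvPolynomial.C (α i)) f).vars :=
    (mem_vars i).2 ⟨a, hmem, hi⟩
  obtain ⟨j, hj, hij⟩ := mem_vars_bind₁ _ _ h1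
  have : i ∈ ({j} : Finset σ) := by
    have := (vars_add_subset _ _) hij
    simpa [vars_X, vars_C] using this
  simp only [Finset.mem_singleton] at this
  exact hf (this ▸ hj)

open MvPolynomial in
lemma hasseAt_mul_of_vars {σ F : Type*} [DecidableEq σ] [CommSemiring F] [Nontrivial F]
    {S : Finset σ} {f h : MvPolynomial σ F}
    (hf : f.vars ⊆ S) (hh : ∀ i ∈ h.vars, i ∉ S) (a : σ →₀ ℕ) (α : σ → F) :
    hasseAt (f * h) a α
      = hasseAt f (a.filter (· ∈ S)) α * hasseAt h (a.filter (· ∉ S)) α := by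
  rw [hasseAt_mul]
  refine Finset.sum_eq_single (a.filter (· ∈ S), a.filter (· ∉ S)) ?_ ?_
  · rintro ⟨b, c⟩ hbc hne
    rw [Finset.HasAntidiagonal.mem_antidiagonal] at hbc
    simp only at hbc ⊢
    by_cases hbS : b.support ⊆ S
    · by_cases hcS : ∀ i ∈ c.support, i ∉ S
      · exfalso
        apply hne
        have hb : b = a.filter (· ∈ S) := by
          ext i
          rw [Finsupp.filter_apply, ← hbc]
          by_cases hiS : i ∈ S
          · have hc0 : c i = 0 := by
              by_contra hc0
              exact hcS i (Finsupp.mem_support_iff.2 hc0) hiS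
            simp [hiS, hc0, Finsupp.add_apply]
          · have hb0 : b i = 0 := by
              by_contra hb0
              exact hiS (hbS (Finsupp.mem_support_iff.2 hb0))
            simp [hiS, hb0]
        have hc : c = a.filter (· ∉ S) := by
          ext i
          rw [Finsupp.filter_apply, ← hbc]
          by_cases hiS : i ∈ S
          · have hc0 : c i = 0 := by
              by_contra hc0
              exact hcS i (Finsupp.mem_support_iff.2 hc0) hiS
            simp [hiS, hc0]
          · have hb0 : b i = 0 := by
              by_contra hb0
              exact hiS (hbS (Finsupp.mem_support_iff.2 hb0))
            simp [hiS, hb0, Finsupp.add_apply]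
        rw [hb, hc]
      · push_neg at hcS
        obtain ⟨i, hic, hiS⟩ := hcS
        have : ¬ c.support ⊆ h.vars := fun hsub => hh i (hsub hic) hiS
        rw [hasseAt_eq_zero_of_vars (subset_refl h.vars) this, mul_zero]
    · rw [hasseAt_eq_zero_of_vars hf hbS, zero_mul]
  · intro hmem
    exact absurd (Finset.HasAntidiagonal.mem_antidiagonal.2
      (Finsupp.filter_pos_add_filter_neg a (· ∈ S))) hmem

open MvPolynomial in
lemma hasseAt_matrix_mul {F : Type*} [Field F] {n r : ℕ}
    (G H : Matrix (Fin r) (Fin r) (MvPolynomial (Fin n) F)) {S : Finset (Fin n)}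
    (hG : ∀ u v, (G u v).vars ⊆ S) (hH : ∀ u v, ∀ i ∈ (H u v).vars, i ∉ S)
    (a : Fin n →₀ ℕ) (α : Fin n → F) :
    (Matrix.of fun u v => hasseAt ((G * H) u v) a α)
      = (Matrix.of fun u v => hasseAt (G u v) (a.filter (· ∈ S)) α)
        * (Matrix.of fun u v => hasseAt (H u v) (a.filter (· ∉ S)) α) := by
  ext u v
  simp only [Matrix.mul_apply, Matrix.of_apply]
  rw [hasseAt_sum]
  exact Finset.sum_congr rfl fun w _ =>
    hasseAt_mul_of_vars (hG u w) (hH w v) a α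

lemma filter_add_of_support {σ : Type*} [DecidableEq σ] {S : Finset σ} {b c : σ →₀ ℕ}
    (hb : b.support ⊆ S) (hc : ∀ i ∈ c.support, i ∉ S) :
    (b + c).filter (· ∈ S) = b ∧ (b + c).filter (· ∉ S) = c := by
  constructor <;> ext i <;> rw [Finsupp.filter_apply] <;> by_cases hiS : i ∈ S
  · have hc0 : c i = 0 := by
      by_contra h0; exact hc i (Finsupp.mem_support_iff.2 h0) hiS
    simp [hiS, hc0, Finsupp.add_apply]
  · have hb0 : b i = 0 := by
      by_contra h0; exact hiS (hb (Finsupp.mem_support_iff.2 h0))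
    simp [hiS, hb0]
  · have hc0 : c i = 0 := by
      by_contra h0; exact hc i (Finsupp.mem_support_iff.2 h0) hiS
    simp [hiS, hc0]
  · have hb0 : b i = 0 := by
      by_contra h0; exact hiS (hb (Finsupp.mem_support_iff.2 h0))
    simp [hiS, hb0, Finsupp.add_apply]

/-- Let `M ∈ 𝔽[x]^{r×r}` be computed by a width-`r` commutative
ROABP: for every partition of the variables into `S ⊔ Sᶜ` there is a
factorization `M = G·H` with `G` using only the variables of `S` and `H` only
those of `Sᶜ`.  Suppose moreover that whenever `|S| ≤ ⌊log₂ r²⌋ + 1` the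
factor `G` is support-`⌊log₂ r²⌋` rank concentrated at the shift `g`.  Then
`M` itself is support-`⌊log₂ r²⌋` rank concentrated at `g`: every derivative
of support `> ⌊log₂ r²⌋` lies in the span of derivatives of strictly smaller
support, and the span of the derivatives of support `≤ ⌊log₂ r²⌋` equals the
span of all derivatives. -/
theorem stmt_19 {𝔽 : Type*} [Field 𝔽] {n r : ℕ}
    (M : Matrix (Fin r) (Fin r) (MvPolynomial (Fin n) 𝔽))
    (g : Fin n → 𝔽)
    (hfac : ∀ S : Finset (Fin n),
      ∃ G H : Matrix (Fin r) (Fin r) (MvPolynomial (Fin n) 𝔽),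
        (∀ u v, (G u v).vars ⊆ S) ∧ (∀ u v, (H u v).vars ⊆ Sᶜ) ∧
        M = G * H ∧
        (S.card ≤ Nat.log 2 (r * r) + 1 →
          Submodule.span 𝔽
              {D : Matrix (Fin r) (Fin r) 𝔽 | ∃ a : Fin n →₀ ℕ,
                a.support.card ≤ Nat.log 2 (r * r) ∧
                D = Matrix.of fun u v => hasseAt (G u v) a g}
            = Submodule.span 𝔽
              {D : Matrix (Fin r) (Fin r) 𝔽 | ∃ a : Fin n →₀ ℕ,
                D = Matrix.of fun u v => hasseAt (G u v) a g})) :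
    (∀ a : Fin n →₀ ℕ, Nat.log 2 (r * r) < a.support.card →
      (Matrix.of fun u v => hasseAt (M u v) a g) ∈
        Submodule.span 𝔽
          {D : Matrix (Fin r) (Fin r) 𝔽 | ∃ a' : Fin n →₀ ℕ,
            a'.support.card < a.support.card ∧
            D = Matrix.of fun u v => hasseAt (M u v) a' g}) ∧
    Submodule.span 𝔽
        {D : Matrix (Fin r) (Fin r) 𝔽 | ∃ a : Fin n →₀ ℕ,
          a.support.card ≤ Nat.log 2 (r * r) ∧
          D = Matrix.of fun u v => hasseAt (M u v) a g}
      = Submodule.span 𝔽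
        {D : Matrix (Fin r) (Fin r) 𝔽 | ∃ a : Fin n →₀ ℕ,
          D = Matrix.of fun u v => hasseAt (M u v) a g} := by
  classical
  set L := Nat.log 2 (r * r) with hL
  have part1 : ∀ a : Fin n →₀ ℕ, L < a.support.card →
      (Matrix.of fun u v => hasseAt (M u v) a g) ∈
        Submodule.span 𝔽
          {D : Matrix (Fin r) (Fin r) 𝔽 | ∃ a' : Fin n →₀ ℕ,
            a'.support.card < a.support.card ∧
            D = Matrix.of fun u v => hasseAt (M u v) a' g} := by
    intro a ha
    obtain ⟨S, hSsub, hScard⟩ := Finset.exists_subset_card_eq (n := L + 1)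
      (s := a.support) (by omega)
    obtain ⟨G, H, hG, hH, hM, hconc⟩ := hfac S
    have hH' : ∀ u v, ∀ i ∈ (H u v).vars, i ∉ S := by
      intro u v i hi
      simpa using Finset.mem_compl.1 (hH u v hi)
    have hconc' := hconc (by omega)
    set c₀ : Fin n →₀ ℕ := a.filter (· ∉ S) with hc₀
    set DH : Matrix (Fin r) (Fin r) 𝔽 :=
      Matrix.of fun u v => hasseAt (H u v) c₀ g with hDH
    set DG : Matrix (Fin r) (Fin r) 𝔽 :=
      Matrix.of fun u v => hasseAt (G u v) (a.filter (· ∈ S)) g with hDG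
    have hMa : (Matrix.of fun u v => hasseAt (M u v) a g) = DG * DH := by
      rw [hM]; exact hasseAt_matrix_mul G H hG hH' a g
    have hDGmem : DG ∈ Submodule.span 𝔽
        {D : Matrix (Fin r) (Fin r) 𝔽 | ∃ b : Fin n →₀ ℕ,
          b.support.card ≤ L ∧ D = Matrix.of fun u v => hasseAt (G u v) b g} := by
      rw [hconc']
      exact Submodule.subset_span ⟨a.filter (· ∈ S), rfl⟩
    have hc₀card : c₀.support.card = a.support.card - (L + 1) := by
      have : c₀.support = a.support \ S := by
        rw [hc₀, Finsupp.support_filter, Finset.sdiff_eq_filter]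
      rw [this, Finset.card_sdiff_of_subset hSsub, hScard]
    let φ : Matrix (Fin r) (Fin r) 𝔽 →ₗ[𝔽] Matrix (Fin r) (Fin r) 𝔽 :=
      LinearMap.mulRight 𝔽 DH
    have hφ : φ DG ∈ Submodule.span 𝔽
        (φ '' {D : Matrix (Fin r) (Fin r) 𝔽 | ∃ b : Fin n →₀ ℕ,
          b.support.card ≤ L ∧ D = Matrix.of fun u v => hasseAt (G u v) b g}) :=
      Submodule.apply_mem_span_image_of_mem_span φ hDGmem
    have hle : Submodule.span 𝔽
        (φ '' {D : Matrix (Fin r) (Fin r) 𝔽 | ∃ b : Fin n →₀ ℕ,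
          b.support.card ≤ L ∧ D = Matrix.of fun u v => hasseAt (G u v) b g})
        ≤ Submodule.span 𝔽
          {D : Matrix (Fin r) (Fin r) 𝔽 | ∃ a' : Fin n →₀ ℕ,
            a'.support.card < a.support.card ∧
            D = Matrix.of fun u v => hasseAt (M u v) a' g} := by
      rw [Submodule.span_le]
      rintro _ ⟨D, ⟨b, hbcard, rfl⟩, rfl⟩
      by_cases hbS : b.support ⊆ S
      · have hkey := filter_add_of_support (S := S) (c := c₀) hbS
          (by intro i hi
              rw [hc₀, Finsupp.support_filter] at hi
              exact (Finset.mem_filter.1 hi).2)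
        have heq : (Matrix.of fun u v => hasseAt (G u v) b g) * DH
            = Matrix.of fun u v => hasseAt (M u v) (b + c₀) g := by
          rw [hM, hasseAt_matrix_mul G H hG hH' (b + c₀) g, hkey.1, hkey.2]
        have hsupp : (b + c₀).support.card < a.support.card := by
          rw [Finsupp.support_add_eq, Finset.card_union_of_disjoint]
          · omega
          · refine Finset.disjoint_left.2 fun i hib hic => ?_
            rw [hc₀, Finsupp.support_filter] at hic
            exact (Finset.mem_filter.1 hic).2 (hbS hib)
          · refine Finset.disjoint_left.2 fun i hib hic => ?_
            rw [hc₀, Finsupp.support_filter] at hic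
            exact (Finset.mem_filter.1 hic).2 (hbS hib)
        have : φ (Matrix.of fun u v => hasseAt (G u v) b g)
            = Matrix.of fun u v => hasseAt (M u v) (b + c₀) g := heq
        rw [SetLike.mem_coe, this]
        exact Submodule.subset_span ⟨b + c₀, hsupp, rfl⟩
      · have hzero : (Matrix.of fun u v => hasseAt (G u v) b g) = 0 := by
          ext u v
          exact hasseAt_eq_zero_of_vars (hG u v) hbS g
        have : φ (Matrix.of fun u v => hasseAt (G u v) b g) = 0 := by
          rw [hzero]; exact map_zero φ
        rw [SetLike.mem_coe, this]
        exact Submodule.zero_mem _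
    have := hle hφ
    have hφDG : φ DG = DG * DH := rfl
    rw [hφDG] at this
    rwa [hMa]
  refine ⟨part1, ?_⟩
  refine le_antisymm (Submodule.span_mono ?_) ?_
  · rintro D ⟨a, _, hD⟩
    exact ⟨a, hD⟩
  · rw [Submodule.span_le]
    rintro _ ⟨a, rfl⟩
    have key : ∀ m (a : Fin n →₀ ℕ), a.support.card ≤ m →
        (Matrix.of fun u v => hasseAt (M u v) a g) ∈
          Submodule.span 𝔽
            {D : Matrix (Fin r) (Fin r) 𝔽 | ∃ b : Fin n →₀ ℕ,
              b.support.card ≤ L ∧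
              D = Matrix.of fun u v => hasseAt (M u v) b g} := by
      intro m
      induction m with
      | zero => intro a ha; exact Submodule.subset_span ⟨a, by omega, rfl⟩
      | succ m ih =>
        intro a ha
        by_cases hcard : a.support.card ≤ L
        · exact Submodule.subset_span ⟨a, hcard, rfl⟩
        · push_neg at hcard
          refine Submodule.span_le.2 ?_ (part1 a hcard)
          rintro _ ⟨a', ha', rfl⟩
          exact ih a' (by omega)
    exact key a.support.card a le_rfl
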